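/- Let α > 0 and suppose the vectors x*, y*, ν_x, ν_y ∈ ℝⁿ, λ ∈ ℝᵐ, μ ∈ ℝ^q satisfy: x* ≥ 0, y* ≥ 0, λ ≥ 0, ν_x ≥ 0, ν_y ≥ 0; ∇f(x*) + Σ_i λ_i ∇g_i(x*) + Σ_j μ_j ∇h_j(x*) + α·y* − ν_x = 0; p_i′(y*_i) + α·x*_i − (ν_y)_i = 0 for all i; min{−g_i(x*), λ_i} = 0 for all i = 1, …, m; h(x*) = 0; min{x*_i, (ν_x)_i} = 0 and min{y*_i, (ν_y)_i} = 0 for all i = 1, …, n; and Σ_{i=1}^n x*_i·y*_i = 0. Then x* is S-stationary for (SPO), y*_i = s_i for every i with x*_i = 0 and y*_i = 0 for every i with x*_i ≠ 0, and (x*, y*) is a KKT point of (SPOref). -/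

import Mathlib

open Filter Topology

noncomputable section

/-- Euclidean n-space. -/
abbrev E (n : ℕ) : Type := EuclideanSpace ℝ (Fin n)

/-- The SP-Lagrangian L(x, λ, μ) = f(x) + λᵀg(x) + μᵀh(x). -/
def LSP {n m q : ℕ} (f : E n → ℝ) (g : Fin m → E n → ℝ) (h : Fin q → E n → ℝ)
    (lam : Fin m → ℝ) (mu : Fin q → ℝ) (x : E n) : ℝ :=
  f x + (∑ i, lam i * g i x) + (∑ j, mu j * h j x)

/-- S-stationarity of x* for (SPO). -/
def SStat {n m q : ℕ} (f : E n → ℝ) (g : Fin m → E n → ℝ) (h : Fin q → E n → ℝ)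
    (xstar : E n) : Prop :=
  ∃ (lam : Fin m → ℝ) (mu : Fin q → ℝ),
    (∀ i, 0 ≤ lam i) ∧ (∀ i, lam i * g i xstar = 0) ∧
    ∀ i, xstar i ≠ 0 → gradient (LSP f g h lam mu) xstar i = 0

/-- KKT point of the reformulation (SPOref). -/
def KKTref {n m q : ℕ} (f : E n → ℝ) (g : Fin m → E n → ℝ) (h : Fin q → E n → ℝ)
    (p : Fin n → ℝ → ℝ) (x y : E n) : Prop :=
  (∀ i, g i x ≤ 0) ∧ (∀ j, h j x = 0) ∧ (∀ i, 0 ≤ x i) ∧ (∀ i, x i * y i = 0) ∧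
  ∃ (lam : Fin m → ℝ) (mu : Fin q → ℝ) (ν γ : Fin n → ℝ),
    (∀ i, 0 ≤ lam i) ∧ (∀ i, lam i * g i x = 0) ∧
    (∀ i, 0 ≤ ν i) ∧ (∀ i, ν i * x i = 0) ∧
    (∀ k, gradient f x k + (∑ i, lam i * gradient (g i) x k) +
        (∑ j, mu j * gradient (h j) x k) - ν k + γ k * y k = 0) ∧
    (∀ i, deriv (p i) (y i) + γ i * x i = 0)


/-- Coordinate of the gradient equals the Fréchet derivative applied to a basis vector. -/
lemma grad_coord {n : ℕ} (u : E n → ℝ) (x : E n) (hu : DifferentiableAt ℝ u x) (k : Fin n) :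
    gradient u x k = fderiv ℝ u x (EuclideanSpace.single k 1) := by
  have h1 : HasFDerivAt u ((InnerProductSpace.toDual ℝ (E n)) (gradient u x)) x :=
    hasGradientAt_iff_hasFDerivAt.1 hu.hasGradientAt
  rw [h1.fderiv]
  rw [InnerProductSpace.toDual_apply_apply, EuclideanSpace.inner_single_right]
  simp

/-- if the penalty method terminates with exact tolerances
(δ = 0), then the final point is S-stationary and is a KKT point of
(SPOref). -/
theorem stmt_13 {n m q : ℕ} (hn : 1 ≤ n) {ρ : ℝ} (hρ : 0 < ρ)
    (f : E n → ℝ) (g : Fin m → E n → ℝ) (h : Fin q → E n → ℝ)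
    (hf : ContDiff ℝ 1 f) (hg : ∀ i, ContDiff ℝ 1 (g i)) (hh : ∀ j, ContDiff ℝ 1 (h j))
    (p : Fin n → ℝ → ℝ) (s : Fin n → ℝ)
    (hp : ∀ i, ContDiff ℝ 1 (p i))
    (hconv : ∀ i, ConvexOn ℝ Set.univ (p i))
    (hspos : ∀ i, 0 < s i)
    (hmin : ∀ i t, p i (s i) ≤ p i t)
    (hstrict : ∀ i t, t ≠ s i → p i (s i) < p i t)
    (hscale : ∀ i, p i 0 - p i (s i) = ρ)
    {α : ℝ} (hα : 0 < α)
    (xstar ystar : E n) (νx νy : Fin n → ℝ) (lam : Fin m → ℝ) (mu : Fin q → ℝ)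
    -- sign conditions:
    (hxnn : ∀ i, 0 ≤ xstar i) (hynn : ∀ i, 0 ≤ ystar i)
    (hlamnn : ∀ i, 0 ≤ lam i) (hνxnn : ∀ i, 0 ≤ νx i) (hνynn : ∀ i, 0 ≤ νy i)
    -- exact stationarity of the penalized problem:
    (hstat1 : ∀ k, gradient f xstar k + (∑ i, lam i * gradient (g i) xstar k) +
        (∑ j, mu j * gradient (h j) xstar k) + α * ystar k - νx k = 0)
    (hstat2 : ∀ i, deriv (p i) (ystar i) + α * xstar i - νy i = 0)
    -- exact complementarity / feasibility conditions:
    (hming : ∀ i, min (-(g i xstar)) (lam i) = 0)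
    (hhx : ∀ j, h j xstar = 0)
    (hminx : ∀ i, min (xstar i) (νx i) = 0)
    (hminy : ∀ i, min (ystar i) (νy i) = 0)
    (hcompl : ∑ i, xstar i * ystar i = 0) :
    SStat f g h xstar ∧
    (∀ i, (xstar i = 0 → ystar i = s i) ∧ (xstar i ≠ 0 → ystar i = 0)) ∧
    KKTref f g h p xstar ystar := by

  -- differentiability facts
  have hfd : Differentiable ℝ f := hf.differentiable one_ne_zero
  have hgd : ∀ i, Differentiable ℝ (g i) := fun i => (hg i).differentiable one_ne_zero
  have hhd : ∀ j, Differentiable ℝ (h j) := fun j => (hh j).differentiable one_ne_zero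
  have hpd : ∀ i, Differentiable ℝ (p i) := fun i => (hp i).differentiable one_ne_zero
  -- componentwise complementarity
  have hxy0 : ∀ i, xstar i * ystar i = 0 := fun i =>
    (Finset.sum_eq_zero_iff_of_nonneg (fun i _ => mul_nonneg (hxnn i) (hynn i))).1 hcompl i
      (Finset.mem_univ i)
  have keyx : ∀ i, xstar i ≠ 0 → ystar i = 0 := by
    intro i hi
    rcases mul_eq_zero.1 (hxy0 i) with h' | h'
    · exact absurd h' hi
    · exact h'
  have hxpos : ∀ i, xstar i ≠ 0 → 0 < xstar i := fun i hi => lt_of_le_of_ne (hxnn i) (Ne.symm hi)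
  have hνx0 : ∀ i, xstar i ≠ 0 → νx i = 0 := by
    intro i hi
    by_contra hne
    have h1 : 0 < νx i := lt_of_le_of_ne (hνxnn i) (Ne.symm hne)
    have h2 := lt_min (hxpos i hi) h1
    rw [hminx i] at h2
    exact lt_irrefl 0 h2
  -- derivative of pᵢ at sᵢ is zero
  have hps0 : ∀ i, deriv (p i) (s i) = 0 := fun i =>
    IsLocalMin.deriv_eq_zero (Filter.Eventually.of_forall (fun t => hmin i t))
  -- derivative of pᵢ at 0 is negative
  have hpneg : ∀ i, deriv (p i) 0 < 0 := by
    intro i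
    have hsl := (hconv i).deriv_le_slope (Set.mem_univ 0) (Set.mem_univ (s i)) (hspos i)
      (hpd i 0)
    have hval : slope (p i) 0 (s i) < 0 := by
      rw [slope_def_field]
      apply div_neg_of_neg_of_pos
      · have := hscale i; linarith
      · simpa using hspos i
    linarith
  -- the only critical point of pᵢ is sᵢ
  have huniq : ∀ i y, deriv (p i) y = 0 → y = s i := by
    intro i y hy
    by_contra hne
    rcases lt_or_gt_of_ne hne with hlt | hgt
    · have hsl := (hconv i).deriv_le_slope (Set.mem_univ y) (Set.mem_univ (s i)) hlt (hpd i y)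
      have hval : slope (p i) y (s i) < 0 := by
        rw [slope_def_field]
        apply div_neg_of_neg_of_pos
        · have := hstrict i y hne; linarith
        · linarith
      rw [hy] at hsl; linarith
    · have hsl := (hconv i).slope_le_deriv (Set.mem_univ (s i)) (Set.mem_univ y) hgt (hpd i y)
      have hval : 0 < slope (p i) (s i) y := by
        rw [slope_def_field]
        apply div_pos
        · have := hstrict i y hne; linarith
        · linarith
      rw [hy] at hsl; linarith
  -- y-values at zero x-components
  have keyy : ∀ i, xstar i = 0 → ystar i = s i := by
    intro i hi
    have h2 := hstat2 i
    rw [hi] at h2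
    have hd : deriv (p i) (ystar i) = νy i := by linarith
    have hy0 : ystar i ≠ 0 := by
      intro h0
      rw [h0] at hd
      have := hpneg i
      have := hνynn i
      linarith
    have hypos : 0 < ystar i := lt_of_le_of_ne (hynn i) (Ne.symm hy0)
    have hνy0 : νy i = 0 := by
      by_contra hne
      have h1 : 0 < νy i := lt_of_le_of_ne (hνynn i) (Ne.symm hne)
      have h3 := lt_min hypos h1
      rw [hminy i] at h3
      exact lt_irrefl 0 h3
    exact huniq i _ (by rw [hd, hνy0])
  -- feasibility from the min conditions
  have hgle : ∀ i, g i xstar ≤ 0 := by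
    intro i
    have h1 := min_le_left (-(g i xstar)) (lam i)
    rw [hming i] at h1
    linarith
  have hlamg : ∀ i, lam i * g i xstar = 0 := by
    intro i
    rcases le_total (-(g i xstar)) (lam i) with hle | hle
    · have h1 := hming i
      rw [min_eq_left hle] at h1
      have : g i xstar = 0 := by linarith
      rw [this, mul_zero]
    · have h1 := hming i
      rw [min_eq_right hle] at h1
      rw [h1, zero_mul]
  -- Fréchet derivative of the SP-Lagrangian
  have hLSP : HasFDerivAt (LSP f g h lam mu)
      (fderiv ℝ f xstar + (∑ i, lam i • fderiv ℝ (g i) xstar)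
        + (∑ j, mu j • fderiv ℝ (h j) xstar)) xstar := by
    unfold LSP
    exact ((hfd xstar).hasFDerivAt.fun_add
      (HasFDerivAt.fun_sum fun i _ => ((hgd i xstar).hasFDerivAt.const_mul (lam i)))).fun_add
      (HasFDerivAt.fun_sum fun j _ => ((hhd j xstar).hasFDerivAt.const_mul (mu j)))
  have hLd : DifferentiableAt ℝ (LSP f g h lam mu) xstar := hLSP.differentiableAt
  have hgradL : ∀ k, gradient (LSP f g h lam mu) xstar k =
      gradient f xstar k + (∑ i, lam i * gradient (g i) xstar k)
        + (∑ j, mu j * gradient (h j) xstar k) := by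
    intro k
    rw [grad_coord _ _ hLd k, hLSP.fderiv]
    simp only [ContinuousLinearMap.add_apply, ContinuousLinearMap.sum_apply,
      ContinuousLinearMap.smul_apply, smul_eq_mul]
    rw [grad_coord f xstar (hfd xstar) k]
    congr 1
    · congr 1
      exact Finset.sum_congr rfl fun i _ => by rw [grad_coord _ _ (hgd i xstar) k]
    · exact Finset.sum_congr rfl fun j _ => by rw [grad_coord _ _ (hhd j xstar) k]
  refine ⟨⟨lam, mu, hlamnn, hlamg, ?_⟩, fun i => ⟨keyy i, keyx i⟩, ?_⟩
  · intro k hk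
    rw [hgradL k]
    have h1 := hstat1 k
    rw [hνx0 k hk, keyx k hk] at h1
    linarith
  · refine ⟨hgle, hhx, hxnn, hxy0, lam, mu, νx,
      (fun i => if xstar i = 0 then α else -(deriv (p i) 0) / (xstar i)),
      hlamnn, hlamg, hνxnn, ?_, ?_, ?_⟩
    · intro i
      by_cases hx : xstar i = 0
      · rw [hx, mul_zero]
      · rw [hνx0 i hx, zero_mul]
    · intro k
      have hγy : (if xstar k = 0 then α else -(deriv (p k) 0) / (xstar k)) * ystar k
          = α * ystar k := by
        by_cases hx : xstar k = 0
        · rw [if_pos hx]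
        · rw [if_neg hx, keyx k hx, mul_zero, mul_zero]
      rw [hγy]
      have h1 := hstat1 k
      linarith
    · intro i
      show deriv (p i) (ystar i)
          + (if xstar i = 0 then α else -(deriv (p i) 0) / (xstar i)) * xstar i = 0
      by_cases hx : xstar i = 0
      · rw [if_pos hx, hx, mul_zero, keyy i hx, hps0 i, add_zero]
      · rw [if_neg hx, keyx i hx, div_mul_cancel₀ _ hx]
        ring
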